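/- Let B ≠ D be points of the Euclidean plane and let θ₁, θ₂ be angles with 0 < θ₁ < π/2 and 0 < θ₂ < π/2. Let A and C be points lying strictly on opposite sides of the line through B and D, with ∠DAB = θ₁ and ∠DCB = θ₂. Then dist(A, C) ≤ (dist(B, D)/2) · (cot(θ₁/2) + cot(θ₂/2)), with equality if and only if dist(A, B) = dist(A, D) and dist(C, B) = dist(C, D). In particular, among all such quadrilaterals with given dist(B, D), θ₁ and θ₂, the distance dist(A, C) is maximized by a unique configuration up to congruence, and that configuration satisfies |AB| = |AD| and |CB| = |CD|. -/

import Mathlib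

noncomputable section

open EuclideanGeometry Real

/-- The Euclidean plane. -/
abbrev Plane : Type := EuclideanSpace ℝ (Fin 2)

private lemma median_sq (A B D : Plane) :
    4 * dist A (midpoint ℝ B D) ^ 2 + dist B D ^ 2 = 2 * dist A B ^ 2 + 2 * dist A D ^ 2 := by
  have hM : A - midpoint ℝ B D = (2:ℝ)⁻¹ • ((A - B) + (A - D)) := by
    rw [midpoint_eq_smul_add, invOf_eq_inv]
    module
  have hBD : B - D = (A - D) - (A - B) := by abel
  have hpar := parallelogram_law_with_norm ℝ (A - B) (A - D)
  have h1 : dist A (midpoint ℝ B D) = (2:ℝ)⁻¹ * ‖(A - B) + (A - D)‖ := by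
    rw [dist_eq_norm, hM, norm_smul]
    norm_num
  have h2 : dist B D = ‖(A - D) - (A - B)‖ := by rw [dist_eq_norm, hBD]
  have h3 : dist A B = ‖A - B‖ := dist_eq_norm _ _
  have h4 : dist A D = ‖A - D‖ := dist_eq_norm _ _
  have h5 : ‖(A - B) - (A - D)‖ = ‖(A - D) - (A - B)‖ := norm_sub_rev _ _
  rw [h1, h2, h3, h4]
  rw [h5] at hpar
  ring_nf at hpar ⊢
  nlinarith [hpar]

private lemma cot_ineq {b d s m c k : ℝ} (hb : 0 < b) (hd : 0 < d) (hs : 0 < s)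
    (hm0 : 0 ≤ m) (hc0 : 0 < c) (hc1 : c < 1) (hk : 0 < k)
    (hk2 : k ^ 2 * (1 - c) = 1 + c)
    (hlaw2 : s ^ 2 = d ^ 2 + b ^ 2 - 2 * d * b * c)
    (hmed : 4 * m ^ 2 + s ^ 2 = 2 * b ^ 2 + 2 * d ^ 2) :
    m ≤ s / 2 * k ∧ (m = s / 2 * k ↔ b = d) := by
  have h1c : (0:ℝ) < 1 - c := by linarith
  have hm4 : 4 * m ^ 2 = b ^ 2 + d ^ 2 + 2 * d * b * c := by linear_combination hmed - hlaw2
  set T := s / 2 * k with hT_def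
  have hT : 0 < T := by positivity
  have h4T : 4 * T ^ 2 * (1 - c) = s ^ 2 * (1 + c) := by
    rw [hT_def]; linear_combination s ^ 2 * hk2
  have hkey : (1 - c) * (4 * T ^ 2 - 4 * m ^ 2) = 2 * c * (b - d) ^ 2 := by
    linear_combination h4T - (1 - c) * hm4 + (1 + c) * hlaw2
  have hsqle : m ^ 2 ≤ T ^ 2 := by nlinarith [hkey, mul_nonneg hc0.le (sq_nonneg (b - d))]
  have hle : m ≤ T := by nlinarith [hsqle, hT, hm0]
  refine ⟨hle, ?_, ?_⟩
  · intro heq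
    have h0 : 2 * c * (b - d) ^ 2 = 0 := by rw [← hkey, heq]; ring
    have h1 : (b - d) ^ 2 = 0 := by nlinarith [h0, hc0, sq_nonneg (b - d)]
    have := pow_eq_zero_iff (n := 2) (by norm_num) |>.1 h1
    linarith [sub_eq_zero.1 this]
  · intro heq
    have h0 : (1 - c) * (4 * T ^ 2 - 4 * m ^ 2) = 0 := by rw [hkey, heq]; ring
    have h1 : m ^ 2 = T ^ 2 := by
      rcases mul_eq_zero.1 h0 with h | h
      · linarith
      · linarith
    calc m = √(m ^ 2) := (Real.sqrt_sq hm0).symm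
    _ = √(T ^ 2) := by rw [h1]
    _ = T := Real.sqrt_sq hT.le

private lemma apex_dist (B D A : Plane) (hAB : A ≠ B) (hAD : A ≠ D) (hBD : B ≠ D)
    {θ : ℝ} (hθ : 0 < θ) (hθ' : θ < π / 2) (hA : ∠ D A B = θ) :
    dist A (midpoint ℝ B D) ≤ dist B D / 2 * (cos (θ / 2) / sin (θ / 2)) ∧
    (dist A (midpoint ℝ B D) = dist B D / 2 * (cos (θ / 2) / sin (θ / 2)) ↔
      dist A B = dist A D) := by
  have hpi := Real.pi_pos
  have hc0 : 0 < cos θ := Real.cos_pos_of_mem_Ioo ⟨by linarith, hθ'⟩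
  have hc1 : cos θ < 1 := by
    have := Real.cos_lt_cos_of_nonneg_of_le_pi (le_refl 0) (by linarith) hθ
    simpa using this
  have hsin : 0 < sin (θ / 2) := Real.sin_pos_of_pos_of_lt_pi (by linarith) (by linarith)
  have hcosh : 0 < cos (θ / 2) := Real.cos_pos_of_mem_Ioo ⟨by linarith, by linarith⟩
  have hk : 0 < cos (θ / 2) / sin (θ / 2) := div_pos hcosh hsin
  have hcos_sq : cos (θ / 2) ^ 2 = (1 + cos θ) / 2 := by
    have h2 : 2 * (θ / 2) = θ := by ring
    rw [Real.cos_sq, h2]; ring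
  have hsin_sq : sin (θ / 2) ^ 2 = (1 - cos θ) / 2 := by
    have := Real.sin_sq_add_cos_sq (θ / 2)
    linarith
  have hk2 : (cos (θ / 2) / sin (θ / 2)) ^ 2 * (1 - cos θ) = 1 + cos θ := by
    rw [div_pow, hcos_sq, hsin_sq]
    have h1c : (0:ℝ) < 1 - cos θ := by linarith
    field_simp
  have hlaw := EuclideanGeometry.law_cos D A B (V := Plane)
  rw [hA, dist_comm D B, dist_comm D A, dist_comm B A] at hlaw
  have hlaw2 : dist B D ^ 2 = dist A D ^ 2 + dist A B ^ 2 - 2 * dist A D * dist A B * cos θ := by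
    linear_combination hlaw
  have hmed := median_sq A B D
  exact cot_ineq (dist_pos.2 hAB) (dist_pos.2 hAD) (dist_pos.2 hBD) dist_nonneg
    hc0 hc1 hk hk2 hlaw2 hmed

private lemma eq_midpoint_of_mem (B D P : Plane) (hBD : B ≠ D)
    (hP : P ∈ affineSpan ℝ ({B, D} : Set Plane)) (hd : dist P B = dist P D) :
    P = midpoint ℝ B D := by
  have hs : 0 < dist B D := dist_pos.2 hBD
  rw [show P = (P -ᵥ B) +ᵥ B from (vsub_vadd P B).symm] at hP
  obtain ⟨r, hr⟩ := vadd_left_mem_affineSpan_pair.1 hP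
  have hPB : dist P B = |r| * dist B D := by
    rw [dist_eq_norm, dist_eq_norm]
    have : P - B = r • (D - B) := by
      simpa [vsub_eq_sub] using hr.symm
    rw [this, norm_smul, Real.norm_eq_abs, norm_sub_rev]
  have hPD : dist P D = |r - 1| * dist B D := by
    rw [dist_eq_norm, dist_eq_norm]
    have : P - D = (r - 1) • (D - B) := by
      have hPB' : P - B = r • (D - B) := by simpa [vsub_eq_sub] using hr.symm
      rw [sub_smul, ← hPB', one_smul]; abel
    rw [this, norm_smul, Real.norm_eq_abs, norm_sub_rev]
  have habs : |r| = |r - 1| := by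
    rw [hPB, hPD] at hd
    exact mul_right_cancel₀ hs.ne' hd
  have hr2 : r = 1 / 2 := by
    have h3 := congrArg (fun x : ℝ => x ^ 2) habs
    simp only [sq_abs] at h3
    nlinarith [h3]
  have hPeq : P = (2⁻¹ : ℝ) • (D - B) + B := by
    have hPB' : P - B = r • (D - B) := by simpa [vsub_eq_sub] using hr.symm
    rw [hr2] at hPB'
    have := hPB'
    rw [sub_eq_iff_eq_add] at this
    rw [this]; norm_num
  rw [hPeq, midpoint_eq_smul_add, invOf_eq_inv]
  module

private lemma main_ineq (B D : Plane) (hBD : B ≠ D) (θ₁ θ₂ : ℝ)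
    (hθ₁ : 0 < θ₁) (hθ₁' : θ₁ < π / 2) (hθ₂ : 0 < θ₂) (hθ₂' : θ₂ < π / 2)
    (A C : Plane) (hside : (affineSpan ℝ ({B, D} : Set Plane)).SOppSide A C)
    (hA : ∠ D A B = θ₁) (hC : ∠ D C B = θ₂) :
    dist A C ≤ dist B D / 2 * (cos (θ₁ / 2) / sin (θ₁ / 2) + cos (θ₂ / 2) / sin (θ₂ / 2)) ∧
    (dist A C = dist B D / 2 * (cos (θ₁ / 2) / sin (θ₁ / 2) + cos (θ₂ / 2) / sin (θ₂ / 2)) ↔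
      dist A B = dist A D ∧ dist C B = dist C D) := by
  have hAs : A ∉ affineSpan ℝ ({B, D} : Set Plane) := hside.2.1
  have hCs : C ∉ affineSpan ℝ ({B, D} : Set Plane) := hside.2.2
  have hBmem : B ∈ affineSpan ℝ ({B, D} : Set Plane) := left_mem_affineSpan_pair ℝ B D
  have hDmem : D ∈ affineSpan ℝ ({B, D} : Set Plane) := right_mem_affineSpan_pair ℝ B D
  have hAB : A ≠ B := fun h => hAs (h ▸ hBmem)
  have hAD : A ≠ D := fun h => hAs (h ▸ hDmem)
  have hCB : C ≠ B := fun h => hCs (h ▸ hBmem)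
  have hCD : C ≠ D := fun h => hCs (h ▸ hDmem)
  set M := midpoint ℝ B D with hM_def
  obtain ⟨k1le, k1iff⟩ := apex_dist B D A hAB hAD hBD hθ₁ hθ₁' hA
  obtain ⟨k2le, k2iff⟩ := apex_dist B D C hCB hCD hBD hθ₂ hθ₂' hC
  have tri : dist A C ≤ dist A M + dist C M := by
    rw [dist_comm C M]; exact dist_triangle A M C
  constructor
  · nlinarith [tri, k1le, k2le]
  constructor
  · intro heq
    have h1 : dist A M = dist B D / 2 * (cos (θ₁ / 2) / sin (θ₁ / 2)) ∧
        dist C M = dist B D / 2 * (cos (θ₂ / 2) / sin (θ₂ / 2)) := by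
      constructor <;> nlinarith [tri, k1le, k2le, heq]
    exact ⟨k1iff.1 h1.1, k2iff.1 h1.2⟩
  · rintro ⟨h1, h2⟩
    have hAm : dist A M = dist B D / 2 * (cos (θ₁ / 2) / sin (θ₁ / 2)) := k1iff.2 h1
    have hCm : dist C M = dist B D / 2 * (cos (θ₂ / 2) / sin (θ₂ / 2)) := k2iff.2 h2
    obtain ⟨P, hPs, hP⟩ := hside.exists_sbtw
    have hPperp : dist P B = dist P D := by
      have hAperp : A ∈ AffineSubspace.perpBisector B D :=
        AffineSubspace.mem_perpBisector_iff_dist_eq.2 h1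
      have hCperp : C ∈ AffineSubspace.perpBisector B D :=
        AffineSubspace.mem_perpBisector_iff_dist_eq.2 h2
      obtain ⟨t, -, ht⟩ := hP.wbtw
      have : P ∈ AffineSubspace.perpBisector B D := by
        rw [← ht]
        exact AffineMap.lineMap_mem t hAperp hCperp
      exact AffineSubspace.mem_perpBisector_iff_dist_eq.1 this
    have hPM : P = M := eq_midpoint_of_mem B D P hBD hPs hPperp
    rw [hPM] at hP
    have hsum : dist A M + dist M C = dist A C := hP.wbtw.dist_add_dist
    rw [dist_comm M C] at hsum
    nlinarith [hsum, hAm, hCm]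

private lemma sOppSide_vadd_neg {s : AffineSubspace ℝ Plane} {p : Plane} (hp : p ∈ s)
    {v : Plane} (hv : v ∈ s.directionᗮ) (hv0 : v ≠ 0) :
    s.SOppSide (v +ᵥ p) (-v +ᵥ p) := by
  have hmem : ∀ w : Plane, w ∈ s.directionᗮ → w ≠ 0 → w +ᵥ p ∉ s := by
    intro w hw hw0 hmem
    have : w ∈ s.direction := by
      have := AffineSubspace.vsub_mem_direction hmem hp
      simpa using this
    have hinner := (Submodule.mem_orthogonal _ w).1 hw w this
    exact hw0 (inner_self_eq_zero.1 hinner)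
  refine ⟨⟨p, hp, p, hp, ?_⟩, hmem v hv hv0, hmem (-v) (Submodule.neg_mem _ hv) (neg_ne_zero.2 hv0)⟩
  have h1 : (v +ᵥ p) -ᵥ p = v := vadd_vsub v p
  have h2 : p -ᵥ (-v +ᵥ p) = v := by
    rw [vsub_vadd_eq_vsub_sub, vsub_self]
    simp
  rw [h1, h2]
  exact SameRay.rfl

private lemma exists_affineIsometry (B D B' D' : Plane) (hBD : B ≠ D)
    (hdist : dist B D = dist B' D') :
    ∃ ψ : Plane ≃ᵃⁱ[ℝ] Plane, ψ B = B' ∧ ψ D = D' := by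
  have hne : D - B ≠ 0 := sub_ne_zero.2 (Ne.symm hBD)
  have hBD' : B' ≠ D' := by
    intro h
    rw [h, dist_self] at hdist
    exact hBD (dist_eq_zero.1 hdist)
  have hne' : D' - B' ≠ 0 := sub_ne_zero.2 (Ne.symm hBD')
  have hnorm : ‖D - B‖ = ‖D' - B'‖ := by
    have h1 : dist B D = ‖D - B‖ := by rw [dist_eq_norm, norm_sub_rev]
    have h2 : dist B' D' = ‖D' - B'‖ := by rw [dist_eq_norm, norm_sub_rev]
    rw [← h1, ← h2]; exact hdist
  set u : Plane := ‖D - B‖⁻¹ • (D - B) with hu_def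
  set u' : Plane := ‖D' - B'‖⁻¹ • (D' - B') with hu'_def
  have hcard : Module.finrank ℝ Plane = Fintype.card (Fin 2) := by
    simp [finrank_euclideanSpace_fin]
  have hnu : ‖u‖ = 1 := by
    rw [hu_def, norm_smul, norm_inv, norm_norm, inv_mul_cancel₀ (norm_ne_zero_iff.2 hne)]
  have hnu' : ‖u'‖ = 1 := by
    rw [hu'_def, norm_smul, norm_inv, norm_norm, inv_mul_cancel₀ (norm_ne_zero_iff.2 hne')]
  have horth : Orthonormal ℝ (({0} : Set (Fin 2)).restrict (fun _ : Fin 2 => u)) := by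
    constructor
    · intro i; exact hnu
    · intro i j hij
      exact absurd (Subtype.ext (by
        have hi := i.2; have hj := j.2
        simp only [Set.mem_singleton_iff] at hi hj
        rw [hi, hj])) hij
  have horth' : Orthonormal ℝ (({0} : Set (Fin 2)).restrict (fun _ : Fin 2 => u')) := by
    constructor
    · intro i; exact hnu'
    · intro i j hij
      exact absurd (Subtype.ext (by
        have hi := i.2; have hj := j.2
        simp only [Set.mem_singleton_iff] at hi hj
        rw [hi, hj])) hij
  obtain ⟨bb, hbb⟩ := horth.exists_orthonormalBasis_extension_of_card_eq hcard
  obtain ⟨bb', hbb'⟩ := horth'.exists_orthonormalBasis_extension_of_card_eq hcard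
  set L : Plane ≃ₗᵢ[ℝ] Plane := bb.repr.trans bb'.repr.symm with hL_def
  have hLu : L u = u' := by
    have h0 : bb 0 = u := hbb 0 rfl
    have h0' : bb' 0 = u' := hbb' 0 rfl
    rw [hL_def]
    simp only [LinearIsometryEquiv.trans_apply]
    rw [← h0, bb.repr_self 0, bb'.repr_symm_single 0, h0']
  have hLDB : L (D - B) = D' - B' := by
    have : D - B = ‖D - B‖ • u := by
      rw [hu_def, smul_smul, mul_inv_cancel₀ (norm_ne_zero_iff.2 hne), one_smul]
    rw [this, map_smul, hLu, hnorm, hu'_def, smul_smul,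
      mul_inv_cancel₀ (norm_ne_zero_iff.2 hne'), one_smul]
  refine ⟨((AffineIsometryEquiv.vaddConst ℝ B).symm.trans
    L.toAffineIsometryEquiv).trans (AffineIsometryEquiv.vaddConst ℝ B'), ?_, ?_⟩
  · simp only [AffineIsometryEquiv.coe_trans, Function.comp_apply,
      AffineIsometryEquiv.coe_vaddConst, AffineIsometryEquiv.coe_vaddConst_symm,
      LinearIsometryEquiv.coe_toAffineIsometryEquiv]
    show L (B -ᵥ B) +ᵥ B' = B'
    rw [vsub_self, map_zero]
    simp
  · simp only [AffineIsometryEquiv.coe_trans, Function.comp_apply,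
      AffineIsometryEquiv.coe_vaddConst, AffineIsometryEquiv.coe_vaddConst_symm,
      LinearIsometryEquiv.coe_toAffineIsometryEquiv]
    show L (D -ᵥ B) +ᵥ B' = D'
    rw [show D -ᵥ B = D - B from rfl, hLDB]
    show D' - B' + B' = D'
    abel

/-- For a quadrilateral `ABCD` with `A` and `C` strictly on opposite sides of the line `BD`
and fixed acute angles `∠DAB = θ₁`, `∠DCB = θ₂`, one has
`|AC| ≤ (|BD|/2)·(cot(θ₁/2) + cot(θ₂/2))`, with equality iff `|AB| = |AD|` and
`|CB| = |CD|`; moreover the maximizing configuration is unique up to congruence. -/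
theorem diagonal_maximized_quadrilateral (B D : Plane) (hBD : B ≠ D) (θ₁ θ₂ : ℝ)
    (hθ₁ : 0 < θ₁) (hθ₁' : θ₁ < π / 2) (hθ₂ : 0 < θ₂) (hθ₂' : θ₂ < π / 2)
    (A C : Plane)
    (hside : (affineSpan ℝ ({B, D} : Set Plane)).SOppSide A C)
    (hA : ∠ D A B = θ₁) (hC : ∠ D C B = θ₂) :
    dist A C ≤ dist B D / 2 * (cos (θ₁ / 2) / sin (θ₁ / 2) + cos (θ₂ / 2) / sin (θ₂ / 2)) ∧
    (dist A C = dist B D / 2 * (cos (θ₁ / 2) / sin (θ₁ / 2) + cos (θ₂ / 2) / sin (θ₂ / 2)) ↔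
      dist A B = dist A D ∧ dist C B = dist C D) ∧
    (∀ A' B' C' D' : Plane, B' ≠ D' → dist B' D' = dist B D →
      (affineSpan ℝ ({B', D'} : Set Plane)).SOppSide A' C' →
      ∠ D' A' B' = θ₁ → ∠ D' C' B' = θ₂ →
      dist A C = dist B D / 2 * (cos (θ₁ / 2) / sin (θ₁ / 2) + cos (θ₂ / 2) / sin (θ₂ / 2)) →
      dist A' C' = dist B D / 2 * (cos (θ₁ / 2) / sin (θ₁ / 2) + cos (θ₂ / 2) / sin (θ₂ / 2)) →
      ∃ φ : Plane ≃ᵢ Plane, φ A = A' ∧ φ B = B' ∧ φ C = C' ∧ φ D = D') := by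
  obtain ⟨hle, hiff⟩ := main_ineq B D hBD θ₁ θ₂ hθ₁ hθ₁' hθ₂ hθ₂' A C hside hA hC
  refine ⟨hle, hiff, ?_⟩
  intro A' B' C' D' hBD' hdist' hside' hA' hC' heq heq'
  obtain ⟨-, hiff'⟩ := main_ineq B' D' hBD' θ₁ θ₂ hθ₁ hθ₁' hθ₂ hθ₂' A' C' hside' hA' hC'
  have heq'' : dist A' C' =
      dist B' D' / 2 * (cos (θ₁ / 2) / sin (θ₁ / 2) + cos (θ₂ / 2) / sin (θ₂ / 2)) := by
    rw [hdist']; exact heq'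
  obtain ⟨hA'd, hC'd⟩ := hiff'.1 heq''
  obtain ⟨hAd, hCd⟩ := hiff.1 heq
  -- basic membership facts
  have hBmem : B ∈ affineSpan ℝ ({B, D} : Set Plane) := left_mem_affineSpan_pair ℝ B D
  have hDmem : D ∈ affineSpan ℝ ({B, D} : Set Plane) := right_mem_affineSpan_pair ℝ B D
  have hBmem' : B' ∈ affineSpan ℝ ({B', D'} : Set Plane) := left_mem_affineSpan_pair ℝ B' D'
  have hDmem' : D' ∈ affineSpan ℝ ({B', D'} : Set Plane) := right_mem_affineSpan_pair ℝ B' D'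
  have hAB : A ≠ B := fun h => hside.2.1 (h ▸ hBmem)
  have hAD : A ≠ D := fun h => hside.2.1 (h ▸ hDmem)
  have hCB : C ≠ B := fun h => hside.2.2 (h ▸ hBmem)
  have hCD : C ≠ D := fun h => hside.2.2 (h ▸ hDmem)
  have hA'B' : A' ≠ B' := fun h => hside'.2.1 (h ▸ hBmem')
  have hA'D' : A' ≠ D' := fun h => hside'.2.1 (h ▸ hDmem')
  have hC'B' : C' ≠ B' := fun h => hside'.2.2 (h ▸ hBmem')
  have hC'D' : C' ≠ D' := fun h => hside'.2.2 (h ▸ hDmem')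
  set M := midpoint ℝ B D with hM_def
  set M' := midpoint ℝ B' D' with hM'_def
  set T₁ := dist B D / 2 * (cos (θ₁ / 2) / sin (θ₁ / 2)) with hT₁_def
  set T₂ := dist B D / 2 * (cos (θ₂ / 2) / sin (θ₂ / 2)) with hT₂_def
  have hAM : dist A M = T₁ := (apex_dist B D A hAB hAD hBD hθ₁ hθ₁' hA).2.2 hAd
  have hCM : dist C M = T₂ := (apex_dist B D C hCB hCD hBD hθ₂ hθ₂' hC).2.2 hCd
  have hA'M' : dist A' M' = T₁ := by
    rw [hT₁_def, ← hdist']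
    exact (apex_dist B' D' A' hA'B' hA'D' hBD' hθ₁ hθ₁' hA').2.2 hA'd
  have hC'M' : dist C' M' = T₂ := by
    rw [hT₂_def, ← hdist']
    exact (apex_dist B' D' C' hC'B' hC'D' hBD' hθ₂ hθ₂' hC').2.2 hC'd
  have hMmem : M ∈ affineSpan ℝ ({B, D} : Set Plane) := by
    rw [hM_def, ← lineMap_one_half]
    exact AffineMap.lineMap_mem_affineSpan_pair _ _ _
  have hM'mem : M' ∈ affineSpan ℝ ({B', D'} : Set Plane) := by
    rw [hM'_def, ← lineMap_one_half]
    exact AffineMap.lineMap_mem_affineSpan_pair _ _ _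
  have hT₁pos : 0 < T₁ := by
    rw [← hAM]; exact dist_pos.2 (fun h => hside.2.1 (h ▸ hMmem))
  have hT₂pos : 0 < T₂ := by
    rw [← hCM]; exact dist_pos.2 (fun h => hside.2.2 (h ▸ hMmem))
  -- the isometry matching B, D
  obtain ⟨ψ, hψB, hψD⟩ := exists_affineIsometry B D B' D' hBD hdist'.symm
  have hψM : ψ M = M' := by
    have h := AffineMap.map_midpoint (ψ.toAffineEquiv.toAffineMap) B D
    simp only [AffineEquiv.coe_toAffineMap, AffineIsometryEquiv.coe_toAffineEquiv] at h
    rw [hM_def, hM'_def, h, hψB, hψD]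
  -- transport the side hypothesis
  have hsideψ : (affineSpan ℝ ({B', D'} : Set Plane)).SOppSide (ψ A) (ψ C) := by
    have h2 := (AffineEquiv.sOppSide_map_iff
      (s := affineSpan ℝ ({B, D} : Set Plane)) ψ.toAffineEquiv).2 hside
    have hmap : (affineSpan ℝ ({B, D} : Set Plane)).map
        (ψ.toAffineEquiv : Plane →ᵃ[ℝ] Plane) = affineSpan ℝ ({B', D'} : Set Plane) := by
      rw [AffineSubspace.map_span]
      congr 1
      rw [Set.image_pair]
      simp only [AffineEquiv.coe_toAffineMap, AffineIsometryEquiv.coe_toAffineEquiv, hψB, hψD]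
    rw [hmap] at h2
    simpa only [AffineIsometryEquiv.coe_toAffineEquiv] using h2
  -- normal vector setup
  haveI : Fact (Module.finrank ℝ Plane = 2) := ⟨finrank_euclideanSpace_fin⟩
  have hvs : (D' -ᵥ B') ≠ 0 := vsub_ne_zero.2 (Ne.symm hBD')
  set W := (ℝ ∙ (D' -ᵥ B'))ᗮ with hW_def
  have hW1 : Module.finrank ℝ W = 1 := Submodule.finrank_orthogonal_span_singleton hvs
  have hWbot : W ≠ ⊥ := by
    intro h; rw [h] at hW1; simp at hW1
  obtain ⟨n0, hn0W, hn00⟩ := Submodule.exists_mem_ne_zero_of_ne_bot hWbot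
  set n : Plane := ‖n0‖⁻¹ • n0 with hn_def
  have hn0 : n ≠ 0 := smul_ne_zero (inv_ne_zero (norm_ne_zero_iff.2 hn00)) hn00
  have hn1 : ‖n‖ = 1 := by
    rw [hn_def, norm_smul, norm_inv, norm_norm, inv_mul_cancel₀ (norm_ne_zero_iff.2 hn00)]
  have hnW : n ∈ W := Submodule.smul_mem _ _ hn0W
  have hWn : W = ℝ ∙ n := by
    refine (Submodule.eq_of_le_of_finrank_eq ?_ ?_).symm
    · rw [Submodule.span_le]; simpa using hnW
    · rw [hW1, finrank_span_singleton hn0]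
  have hnperp : n ∈ (affineSpan ℝ ({B', D'} : Set Plane)).directionᗮ := by
    rw [direction_affineSpan, vectorSpan_pair_rev]
    exact hnW
  -- candidate characterization
  have hcand : ∀ X : Plane, dist X B' = dist X D' →
      ∃ t : ℝ, X = t • n +ᵥ M' ∧ |t| = dist X M' := by
    intro X hX
    have hXperp : X ∈ AffineSubspace.perpBisector B' D' :=
      AffineSubspace.mem_perpBisector_iff_dist_eq.2 hX
    have hM'perp : M' ∈ AffineSubspace.perpBisector B' D' :=
      AffineSubspace.midpoint_mem_perpBisector _ _
    have hdir := AffineSubspace.vsub_mem_direction hXperp hM'perp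
    rw [AffineSubspace.direction_perpBisector, ← hW_def, hWn,
      Submodule.mem_span_singleton] at hdir
    obtain ⟨t, ht⟩ := hdir
    refine ⟨t, (eq_vadd_iff_vsub_eq _ _ _).2 ht.symm, ?_⟩
    rw [dist_eq_norm_vsub Plane X M', ← ht, norm_smul, hn1, Real.norm_eq_abs, mul_one]
  -- the four coordinates
  obtain ⟨ta, hta, htaabs⟩ := hcand (ψ A) (by
    rw [← hψB, ← hψD, ψ.dist_map, ψ.dist_map]; exact hAd)
  obtain ⟨tc, htc, htcabs⟩ := hcand (ψ C) (by
    rw [← hψB, ← hψD, ψ.dist_map, ψ.dist_map]; exact hCd)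
  obtain ⟨ta', hta', hta'abs⟩ := hcand A' hA'd
  obtain ⟨tc', htc', htc'abs⟩ := hcand C' hC'd
  have hψAM : dist (ψ A) M' = T₁ := by rw [← hψM, ψ.dist_map]; exact hAM
  have hψCM : dist (ψ C) M' = T₂ := by rw [← hψM, ψ.dist_map]; exact hCM
  rw [hψAM] at htaabs
  rw [hψCM] at htcabs
  rw [hA'M'] at hta'abs
  rw [hC'M'] at htc'abs
  have hta0 : ta ≠ 0 := fun h => by rw [h] at htaabs; simp at htaabs; linarith
  have htc0 : tc ≠ 0 := fun h => by rw [h] at htcabs; simp at htcabs; linarith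
  -- instances for reflection
  haveI hne' : Nonempty (affineSpan ℝ ({B', D'} : Set Plane)) := ⟨⟨B', hBmem'⟩⟩
  -- opposite-points lemma
  have hOppP : ∀ t : ℝ, t ≠ 0 →
      (affineSpan ℝ ({B', D'} : Set Plane)).SOppSide (t • n +ᵥ M') ((-t) • n +ᵥ M') := by
    intro t ht
    have h := sOppSide_vadd_neg hM'mem (v := t • n)
      (Submodule.smul_mem _ _ hnperp) (smul_ne_zero ht hn0)
    rwa [← neg_smul] at h
  have hR : ∀ t : ℝ, (EuclideanGeometry.reflection (affineSpan ℝ ({B', D'} : Set Plane)))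
      (t • n +ᵥ M') = (-t) • n +ᵥ M' := by
    intro t
    have h := EuclideanGeometry.reflection_orthogonal_vadd hM'mem
      (v := t • n) (Submodule.smul_mem _ _ hnperp)
    rwa [← neg_smul] at h
  have hRB' : (EuclideanGeometry.reflection (affineSpan ℝ ({B', D'} : Set Plane))) B' = B' :=
    (EuclideanGeometry.reflection_eq_self_iff B').2 hBmem'
  have hRD' : (EuclideanGeometry.reflection (affineSpan ℝ ({B', D'} : Set Plane))) D' = D' :=
    (EuclideanGeometry.reflection_eq_self_iff D').2 hDmem'
  -- case analysis on signs
  have habsA : ta' = ta ∨ ta' = -ta := abs_eq_abs.1 (hta'abs.trans htaabs.symm)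
  have habsC : tc' = tc ∨ tc' = -tc := abs_eq_abs.1 (htc'abs.trans htcabs.symm)
  rcases habsA with h1 | h1
  · rcases habsC with h2 | h2
    · -- ψ works directly
      refine ⟨ψ.toIsometryEquiv, ?_, ?_, ?_, ?_⟩ <;>
        simp only [AffineIsometryEquiv.coe_toIsometryEquiv]
      · rw [hta, hta', h1]
      · exact hψB
      · rw [htc, htc', h2]
      · exact hψD
    · -- contradiction
      exfalso
      have hAeq : A' = ψ A := by rw [hta', h1, ← hta]
      rw [hAeq] at hside'
      have hss := hsideψ.symm.trans hside'
      rw [htc, htc', h2] at hss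
      exact (hOppP tc htc0).not_sSameSide hss
  · rcases habsC with h2 | h2
    · -- contradiction
      exfalso
      have hCeq : C' = ψ C := by rw [htc', h2, ← htc]
      rw [hCeq] at hside'
      have hss := hsideψ.trans hside'.symm
      rw [hta, hta', h1] at hss
      exact (hOppP ta hta0).not_sSameSide hss
    · -- compose with the reflection
      refine ⟨ψ.toIsometryEquiv.trans
        (EuclideanGeometry.reflection (affineSpan ℝ ({B', D'} : Set Plane))).toIsometryEquiv,
        ?_, ?_, ?_, ?_⟩ <;>
        simp only [IsometryEquiv.trans_apply, AffineIsometryEquiv.coe_toIsometryEquiv]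
      · rw [hta, hR ta, hta', h1]
      · rw [hψB, hRB']
      · rw [htc, hR tc, htc', h2]
      · rw [hψD, hRD']
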